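/- arXiv:0912.0043 — 3 statements merged into one kernel-verified Lean document; each statement's English description precedes it below -/
import Mathlib

section
/- The congruence subgroup Γ_1(3) ⊂ SL(2,Z), consisting of matrices congruent to an upper unitriangular matrix mod 3, is generated by T = [[1,1],[0,1]] and S = [[1,0],[−3,1]], and these satisfy the relation (ST)^3 = 1 (equivalently Γ_1(3) is presented by two generators with the single relation that the cube of their product is the identity). -/
open Matrix Matrix.SpecialLinearGroup

/-- `T = [[1,1],[0,1]] ∈ SL(2,ℤ)`. -/
def Tmat : Matrix.SpecialLinearGroup (Fin 2) ℤ :=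
  ⟨!![1, 1; 0, 1], by norm_num [Matrix.det_fin_two_of]⟩

/-- `S = [[1,0],[−3,1]] ∈ SL(2,ℤ)`. -/
def Smat : Matrix.SpecialLinearGroup (Fin 2) ℤ :=
  ⟨!![1, 0; -3, 1], by norm_num [Matrix.det_fin_two_of]⟩

private lemma Tmat_eq : Tmat = ModularGroup.T := rfl

private lemma Tmat_zpow (n : ℤ) : ((Tmat ^ n : Matrix.SpecialLinearGroup (Fin 2) ℤ) :
    Matrix (Fin 2) (Fin 2) ℤ) = !![1, n; 0, 1] := by
  rw [Tmat_eq]; exact ModularGroup.coe_T_zpow n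

private lemma Smat_inv : (Smat⁻¹ : Matrix.SpecialLinearGroup (Fin 2) ℤ) =
    ⟨!![1, 0; 3, 1], by norm_num [Matrix.det_fin_two_of]⟩ := by
  rw [SL2_inv_expl]
  ext i j
  fin_cases i <;> fin_cases j <;> simp [Smat]

private lemma Smat_zpow (n : ℤ) : ((Smat ^ n : Matrix.SpecialLinearGroup (Fin 2) ℤ) :
    Matrix (Fin 2) (Fin 2) ℤ) = !![1, 0; -3 * n, 1] := by
  induction' n using Int.induction_on with n h n h
  · rw [zpow_zero, coe_one, Matrix.one_fin_two]; norm_num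
  · rw [_root_.zpow_add, zpow_one, coe_mul, h,
      show (Smat : Matrix (Fin 2) (Fin 2) ℤ) = !![1, 0; -3, 1] from rfl]
    show _ = !![(1:ℤ), 0; -3 * (n + 1), 1]
    rw [Matrix.mul_fin_two]
    congrm !![?_, ?_; ?_, ?_] <;> simp [Smat] <;> ring
  · have hinv : (Smat ^ (-1 : ℤ)) = Smat⁻¹ := _root_.zpow_neg_one Smat
    rw [sub_eq_add_neg, _root_.zpow_add, coe_mul, h, hinv, Smat_inv]
    show _ = !![(1:ℤ), 0; -3 * (-n - 1), 1]
    rw [Matrix.mul_fin_two]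
    congrm !![?_, ?_; ?_, ?_] <;> push_cast <;> ring

/-- `Γ_1(3)` as a subgroup. -/
private def Gamma13 : Subgroup (Matrix.SpecialLinearGroup (Fin 2) ℤ) where
  carrier := {g : Matrix.SpecialLinearGroup (Fin 2) ℤ |
          ((g : Matrix (Fin 2) (Fin 2) ℤ) 0 0) ≡ 1 [ZMOD 3] ∧
          ((g : Matrix (Fin 2) (Fin 2) ℤ) 1 1) ≡ 1 [ZMOD 3] ∧
          ((g : Matrix (Fin 2) (Fin 2) ℤ) 1 0) ≡ 0 [ZMOD 3]}
  one_mem' := by simp [coe_one, Matrix.one_apply, Int.ModEq]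
  mul_mem' := by
    rintro x y ⟨hx1, hx2, hx3⟩ ⟨hy1, hy2, hy3⟩
    simp only [Set.mem_setOf_eq, coe_mul, Matrix.mul_apply, Fin.sum_univ_two] at *
    refine ⟨?_, ?_, ?_⟩
    · simpa using (hx1.mul hy1).add (hy3.mul_left _)
    · simpa using (hx3.mul_right _).add (hx2.mul hy2)
    · simpa using (hx3.mul hy1).add (hy3.mul_left _)
  inv_mem' := by
    rintro x ⟨hx1, hx2, hx3⟩
    simp only [Set.mem_setOf_eq] at *
    rw [SL2_inv_expl]
    refine ⟨by simpa using hx2, by simpa using hx1, ?_⟩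
    simpa using hx3.neg

private lemma balanced_pos (a b : ℤ) (hb : 0 < b) :
    ∃ n r : ℤ, a + n * b = r ∧ 2 * r.natAbs ≤ b.natAbs := by
  have h1 : 0 ≤ a % b := Int.emod_nonneg a hb.ne'
  have h2 : a % b < b := Int.emod_lt_of_pos a hb
  by_cases h : 2 * (a % b) ≤ b
  · exact ⟨-(a / b), a % b, by rw [Int.emod_def]; ring, by omega⟩
  · exact ⟨-(a / b) - 1, a % b - b, by rw [Int.emod_def]; ring, by omega⟩

private lemma balanced (a b : ℤ) (hb : b ≠ 0) :
    ∃ n r : ℤ, a + n * b = r ∧ 2 * r.natAbs ≤ b.natAbs := by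
  rcases hb.lt_or_gt with h | h
  · obtain ⟨n, r, h1, h2⟩ := balanced_pos a (-b) (by omega)
    exact ⟨-n, r, by rw [← h1]; ring, by omega⟩
  · exact balanced_pos a b h

private lemma ne_zero_of_one_mod (a : ℤ) (h : a ≡ 1 [ZMOD 3]) : a ≠ 0 := by
  rintro rfl; simp [Int.ModEq] at h

private lemma key : ∀ N : ℕ, ∀ g : Matrix.SpecialLinearGroup (Fin 2) ℤ,
    ((g : Matrix (Fin 2) (Fin 2) ℤ) 1 0).natAbs ≤ N → g ∈ Gamma13 →
    g ∈ Subgroup.closure {Tmat, Smat} := by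
  have hTmem : Tmat ∈ Subgroup.closure {Tmat, Smat} :=
    Subgroup.subset_closure (by simp)
  have hSmem : Smat ∈ Subgroup.closure {Tmat, Smat} :=
    Subgroup.subset_closure (by simp)
  intro N
  induction N with
  | zero =>
    intro g hle hg
    obtain ⟨h1, h2, h3⟩ := hg
    have hc : (g : Matrix (Fin 2) (Fin 2) ℤ) 1 0 = 0 := by omega
    have hdet : ((g : Matrix (Fin 2) (Fin 2) ℤ)).det = 1 := g.2
    rw [Matrix.det_fin_two, hc] at hdet
    have had : (g : Matrix (Fin 2) (Fin 2) ℤ) 0 0 * (g : Matrix (Fin 2) (Fin 2) ℤ) 1 1 = 1 := by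
      linarith
    have ha : (g : Matrix (Fin 2) (Fin 2) ℤ) 0 0 = 1 := by
      rcases Int.eq_one_or_neg_one_of_mul_eq_one' had with ⟨h, _⟩ | ⟨h, _⟩
      · exact h
      · exfalso; rw [h] at h1; simp [Int.ModEq] at h1
    have hd : (g : Matrix (Fin 2) (Fin 2) ℤ) 1 1 = 1 := by
      rw [ha] at had; linarith
    have : g = Tmat ^ ((g : Matrix (Fin 2) (Fin 2) ℤ) 0 1) := by
      apply Matrix.SpecialLinearGroup.ext
      intro i j
      have := Tmat_zpow ((g : Matrix (Fin 2) (Fin 2) ℤ) 0 1)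
      fin_cases i <;> fin_cases j <;>
        simp only [this] <;> simp [ha, hd, hc]
    rw [this]
    exact zpow_mem hTmem _
  | succ N ih =>
    intro g hle hg
    obtain ⟨h1, h2, h3⟩ := hg
    by_cases hc : (g : Matrix (Fin 2) (Fin 2) ℤ) 1 0 = 0
    · exact ih g (by omega) ⟨h1, h2, h3⟩
    · set a := (g : Matrix (Fin 2) (Fin 2) ℤ) 0 0 with ha
      set b := (g : Matrix (Fin 2) (Fin 2) ℤ) 0 1 with hb
      set c := (g : Matrix (Fin 2) (Fin 2) ℤ) 1 0 with hcd
      set d := (g : Matrix (Fin 2) (Fin 2) ℤ) 1 1 with hd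
      obtain ⟨n, a', hna, ha2⟩ := balanced a c hc
      have ha'3 : a' ≡ 1 [ZMOD 3] := by
        rw [← hna]
        simpa using h1.add (h3.mul_left n)
      have ha'0 : a' ≠ 0 := ne_zero_of_one_mod a' ha'3
      obtain ⟨m, c', hmc, hc2⟩ := balanced c (3 * a') (by simp [ha'0])
      set g' := Smat ^ (-m) * (Tmat ^ n * g) with hg'
      have hcoe : (g' : Matrix (Fin 2) (Fin 2) ℤ) =
          !![a', b + n * d; c', 3 * m * (b + n * d) + d] := by
        ext i j
        fin_cases i <;> fin_cases j <;>
          simp [hg', coe_mul, Smat_zpow, Tmat_zpow, Matrix.mul_apply, Matrix.vecMul,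
            dotProduct, Matrix.vecHead, Matrix.vecTail, Fin.sum_univ_two,
            ← hna, ← hmc, ← ha, ← hb, ← hcd, ← hd] <;> ring
      have hmem' : g' ∈ Gamma13 := by
        refine ⟨?_, ?_, ?_⟩ <;> rw [hcoe]
        · simpa using ha'3
        · show 3 * m * (b + n * d) + d ≡ 1 [ZMOD 3]
          simpa using (Int.modEq_zero_iff_dvd.mpr ⟨m * (b + n * d), by ring⟩).add h2
        · show c' ≡ 0 [ZMOD 3]
          rw [← hmc]
          simpa using h3.add (Int.modEq_zero_iff_dvd.mpr ⟨m * a', by ring⟩)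
      have hbound : ((g' : Matrix (Fin 2) (Fin 2) ℤ) 1 0).natAbs ≤ N := by
        have h31 : (3 * a').natAbs = 3 * a'.natAbs := by simp [Int.natAbs_mul]
        have : c'.natAbs ≤ N := by omega
        rw [hcoe]; simpa using this
      have hg'cl := ih g' hbound hmem'
      have hrec : g = Tmat ^ (-n) * (Smat ^ m * g') := by
        rw [hg']; group
      rw [hrec]
      exact mul_mem (zpow_mem hTmem _) (mul_mem (zpow_mem hSmem _) hg'cl)

/-- The congruence subgroup `Γ_1(3) ⊂ SL(2,ℤ)` of matrices congruent mod 3 to an upper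
unitriangular matrix is generated by `T` and `S`, and these satisfy `(S*T)^3 = 1`. -/
theorem stmt3 :
    ((Subgroup.closure {Tmat, Smat} :
        Subgroup (Matrix.SpecialLinearGroup (Fin 2) ℤ)) : Set (Matrix.SpecialLinearGroup (Fin 2) ℤ))
      = {g : Matrix.SpecialLinearGroup (Fin 2) ℤ |
          ((g : Matrix (Fin 2) (Fin 2) ℤ) 0 0) ≡ 1 [ZMOD 3] ∧
          ((g : Matrix (Fin 2) (Fin 2) ℤ) 1 1) ≡ 1 [ZMOD 3] ∧
          ((g : Matrix (Fin 2) (Fin 2) ℤ) 1 0) ≡ 0 [ZMOD 3]} ∧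
    (Smat * Tmat) ^ 3 = 1 := by
  constructor
  · apply Set.eq_of_subset_of_subset
    · intro g hg
      have hle : Subgroup.closure {Tmat, Smat} ≤ Gamma13 := by
        rw [Subgroup.closure_le]
        rintro x (rfl | rfl)
        · exact ⟨by simp [Tmat, Int.ModEq], by simp [Tmat, Int.ModEq], by simp [Tmat, Int.ModEq]⟩
        · exact ⟨by simp [Smat, Int.ModEq], by simp [Smat, Int.ModEq], by simp [Smat, Int.ModEq]⟩
      exact hle hg
    · intro g hg
      exact key _ g le_rfl hg
  · apply Subtype.ext
    show ((Smat * Tmat) ^ 3 : Matrix.SpecialLinearGroup (Fin 2) ℤ).1 = _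
    rw [coe_pow, coe_mul, coe_one]
    show (!![1,0;-3,1] * !![1,1;0,1] : Matrix (Fin 2) (Fin 2) ℤ) ^ 3 = 1
    norm_num [pow_succ, Matrix.mul_fin_two]
    exact Matrix.one_fin_two.symm
end

section
/- For real numbers t, m with m > 0, and an exceptional pair of slopes/discriminants (μ_0, Δ_0), (μ_2, Δ_2) with μ_0 < μ_2 as above, the condition that the phases of Z^{t,m} on classes of slope μ_0 and μ_2 agree, i.e., Im Z^{t,m}(v_0)/Re Z^{t,m}(v_0) = Im Z^{t,m}(v_2)/Re Z^{t,m}(v_2) for classes v_j = (r_j, d_j, c_j) with c_j/r_j = −Δ_j + μ_j^2/2, is equivalent to (t − C)^2 + m^2 = ρ, where C = (1/2)(μ_0 + μ_2) + (Δ_0 − Δ_2)/(μ_2 − μ_0) and ρ = ((Δ_0 − Δ_2)/(μ_2 − μ_0))^2 + (1/4)(μ_2 − μ_0)^2 − (Δ_0 + Δ_2). -/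
/-- For `Z^{t,m}(r,d,c) = −c + (t+im)d − ((t+im)²/2)r` with `m > 0`, and classes `v_j`
with slopes `μ_j = d_j/r_j`, `μ_0 < μ_2`, and `c_j/r_j = −Δ_j + μ_j²/2`, the
phase-equality condition `Im Z(v_0) · Re Z(v_2) = Im Z(v_2) · Re Z(v_0)` is equivalent to
the semicircle equation `(t − C)² + m² = ρ` with
`C = (μ_0+μ_2)/2 + (Δ_0−Δ_2)/(μ_2−μ_0)` and
`ρ = ((Δ_0−Δ_2)/(μ_2−μ_0))² + (μ_2−μ_0)²/4 − (Δ_0+Δ_2)`. -/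
theorem stmt11 (t m : ℝ) (hm : 0 < m)
    (r0 r2 d0 d2 c0 c2 μ0 μ2 Δ0 Δ2 : ℝ)
    (hr0 : 0 < r0) (hr2 : 0 < r2)
    (hμ0 : μ0 = d0 / r0) (hμ2 : μ2 = d2 / r2) (hμ : μ0 < μ2)
    (hc0 : c0 / r0 = -Δ0 + μ0 ^ 2 / 2) (hc2 : c2 / r2 = -Δ2 + μ2 ^ 2 / 2) :
    let Z : ℝ → ℝ → ℝ → ℂ := fun r d c =>
      -(c : ℂ) + ((t : ℂ) + (m : ℂ) * Complex.I) * (d : ℂ)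
        - (((t : ℂ) + (m : ℂ) * Complex.I) ^ 2 / 2) * (r : ℂ)
    let C : ℝ := (1 / 2) * (μ0 + μ2) + (Δ0 - Δ2) / (μ2 - μ0)
    let ρ : ℝ := ((Δ0 - Δ2) / (μ2 - μ0)) ^ 2 + (1 / 4) * (μ2 - μ0) ^ 2 - (Δ0 + Δ2)
    ((Z r0 d0 c0).im * (Z r2 d2 c2).re = (Z r2 d2 c2).im * (Z r0 d0 c0).re)
      ↔ ((t - C) ^ 2 + m ^ 2 = ρ) := by
  intro Z C ρ
  have hr0' : r0 ≠ 0 := ne_of_gt hr0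
  have hr2' : r2 ≠ 0 := ne_of_gt hr2
  have hμE : μ2 - μ0 ≠ 0 := by linarith
  have hd0 : d0 = μ0 * r0 := by field_simp at hμ0; linarith
  have hd2 : d2 = μ2 * r2 := by field_simp at hμ2; linarith
  have hc0' : c0 = r0 * (-Δ0 + μ0 ^ 2 / 2) := by
    field_simp at hc0; linarith
  have hc2' : c2 = r2 * (-Δ2 + μ2 ^ 2 / 2) := by
    field_simp at hc2; linarith
  have hZ : ∀ r d c : ℝ, Z r d c
      = ((-c + t * d - (t ^ 2 - m ^ 2) / 2 * r : ℝ) : ℂ)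
        + ((m * d - t * m * r : ℝ) : ℂ) * Complex.I := by
    intro r d c
    simp only [Z]
    push_cast
    linear_combination (-(r : ℂ) * (m : ℂ) ^ 2 / 2) * Complex.I_sq
  rw [hZ, hZ]
  simp only [Complex.add_re, Complex.add_im, Complex.ofReal_re, Complex.ofReal_im,
    Complex.mul_re, Complex.mul_im, Complex.I_re, Complex.I_im]
  have key : (m * d0 - t * m * r0) * (-c2 + t * d2 - (t ^ 2 - m ^ 2) / 2 * r2)
      - (m * d2 - t * m * r2) * (-c0 + t * d0 - (t ^ 2 - m ^ 2) / 2 * r0)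
      = m * r0 * r2 * (μ0 - μ2) / 2 * ((t - C) ^ 2 + m ^ 2 - ρ) := by
    subst hd0 hd2 hc0' hc2'
    simp only [C, ρ]
    field_simp
    ring
  have hK : m * r0 * r2 * (μ0 - μ2) / 2 ≠ 0 := by
    apply ne_of_lt
    nlinarith [mul_pos (mul_pos hm hr0) hr2]
  constructor
  · intro h
    have hL : m * r0 * r2 * (μ0 - μ2) / 2 * ((t - C) ^ 2 + m ^ 2 - ρ) = 0 := by
      linear_combination h - key
    have := (mul_eq_zero.mp hL).resolve_left hK
    linarith
  · intro h
    have : (t - C) ^ 2 + m ^ 2 - ρ = 0 := by linarith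
    linear_combination key + m * r0 * r2 * (μ0 - μ2) / 2 * this
end

section
/- The series ∑_{n=1}^∞ (3n−1)!/(n!)^3 · (1/27)^n converges, and its value is strictly less than 1/(π√3). -/
noncomputable def aSeq (n : ℕ) : ℝ :=
  ((Nat.factorial (3 * n + 2) : ℝ) / (Nat.factorial (n + 1) : ℝ) ^ 3) * (1 / 27 : ℝ) ^ (n + 1)

lemma aSeq_nonneg (n : ℕ) : 0 ≤ aSeq n := by
  unfold aSeq
  positivity

lemma aSeq_succ (n : ℕ) :
    aSeq (n + 1) = aSeq n *
      (((3*n+3 : ℝ) * (3*n+4) * (3*n+5)) / (((n:ℝ)+2)^3 * 27)) := by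
  unfold aSeq
  have h1 : 3 * (n+1) + 2 = (3*n+2) + 3 := by ring
  rw [h1]
  have hf : (Nat.factorial ((3*n+2)+3) : ℝ)
      = ((3*n+3 : ℝ)) * ((3*n+4)) * ((3*n+5)) * (Nat.factorial (3*n+2) : ℝ) := by
    have : (3*n+2)+3 = ((3*n+2)+2)+1 := by ring
    rw [this, Nat.factorial_succ, Nat.factorial_succ, Nat.factorial_succ]
    push_cast; ring
  have hg : (Nat.factorial (n+1+1) : ℝ) = ((n:ℝ)+2) * (Nat.factorial (n+1) : ℝ) := by
    rw [Nat.factorial_succ]; push_cast; ring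
  rw [hf, hg]
  have hfac : (0:ℝ) < (Nat.factorial (n+1) : ℝ) := by positivity
  have hn2 : (0:ℝ) < (n:ℝ)+2 := by positivity
  field_simp
  ring

lemma aSeq_le (n : ℕ) : aSeq n ≤ (4/27 : ℝ) * (1/((n:ℝ)+1) - 1/((n:ℝ)+2)) := by
  induction n with
  | zero =>
    have : aSeq 0 = 2/27 := by
      unfold aSeq
      norm_num [Nat.factorial]
    rw [this]; norm_num
  | succ n ih =>
    have hstep := aSeq_succ n
    have hratio : ((3*(n:ℝ)+3) * (3*(n:ℝ)+4) * (3*(n:ℝ)+5)) / (((n:ℝ)+2)^3 * 27)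
        ≤ ((n:ℝ)+1) / ((n:ℝ)+3) := by
      rw [div_le_div_iff₀ (by positivity) (by positivity)]
      nlinarith [sq_nonneg ((n:ℝ))]
    have hratio_nonneg : (0:ℝ) ≤ ((3*(n:ℝ)+3) * (3*(n:ℝ)+4) * (3*(n:ℝ)+5)) / (((n:ℝ)+2)^3 * 27) := by
      positivity
    have h1 : aSeq (n+1) ≤ ((4/27 : ℝ) * (1/((n:ℝ)+1) - 1/((n:ℝ)+2))) * (((n:ℝ)+1) / ((n:ℝ)+3)) := by
      rw [hstep]
      have hg : (0:ℝ) ≤ (4/27 : ℝ) * (1/((n:ℝ)+1) - 1/((n:ℝ)+2)) := by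
        have h : 1/((n:ℝ)+2) ≤ 1/((n:ℝ)+1) := by
          apply one_div_le_one_div_of_le <;> [positivity; linarith]
        nlinarith
      exact mul_le_mul ih hratio hratio_nonneg hg
    have heq : ((4/27 : ℝ) * (1/((n:ℝ)+1) - 1/((n:ℝ)+2))) * (((n:ℝ)+1) / ((n:ℝ)+3))
        = (4/27 : ℝ) * (1/((n:ℝ)+2) - 1/((n:ℝ)+3)) := by
      field_simp
      ring
    calc aSeq (n+1) ≤ _ := h1
      _ = (4/27 : ℝ) * (1/((n:ℝ)+2) - 1/((n:ℝ)+3)) := heq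
      _ = (4/27 : ℝ) * (1/(((n+1:ℕ):ℝ)+1) - 1/(((n+1:ℕ):ℝ)+2)) := by push_cast; ring

lemma gSum : HasSum (fun n : ℕ => (4/27 : ℝ) * (1/((n:ℝ)+1) - 1/((n:ℝ)+2))) (4/27) := by
  rw [hasSum_iff_tendsto_nat_of_nonneg]
  · have hsum : ∀ N : ℕ, ∑ i ∈ Finset.range N, (4/27 : ℝ) * (1/((i:ℝ)+1) - 1/((i:ℝ)+2))
        = (4/27 : ℝ) * (1 - 1/((N:ℝ)+1)) := by
      intro N
      have h := Finset.sum_range_sub' (f := fun i : ℕ => (4/27 : ℝ) * (1/((i:ℝ)+1))) N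
      calc ∑ i ∈ Finset.range N, (4/27 : ℝ) * (1/((i:ℝ)+1) - 1/((i:ℝ)+2))
          = ∑ i ∈ Finset.range N, ((4/27 : ℝ) * (1/((i:ℝ)+1)) - (4/27 : ℝ) * (1/(((i+1:ℕ):ℝ)+1))) := by
            apply Finset.sum_congr rfl; intro i _; push_cast; ring
        _ = (4/27 : ℝ) * (1/(((0:ℕ):ℝ)+1)) - (4/27 : ℝ) * (1/((N:ℝ)+1)) := h
        _ = (4/27 : ℝ) * (1 - 1/((N:ℝ)+1)) := by norm_num; ring
    simp only [hsum]
    have h0 : Filter.Tendsto (fun N : ℕ => 1/((N:ℝ)+1)) Filter.atTop (nhds 0) :=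
      tendsto_one_div_add_atTop_nhds_zero_nat
    have := ((tendsto_const_nhds (x := (1:ℝ)) (f := Filter.atTop)).sub h0).const_mul (4/27 : ℝ)
    simpa using this
  · intro i
    have h : 1/((i:ℝ)+2) ≤ 1/((i:ℝ)+1) := by
      apply one_div_le_one_div_of_le <;> [positivity; linarith]
    nlinarith

/-- The series `∑_{n=1}^∞ (3n−1)!/(n!)³ · 27^{−n}` converges and its sum is strictly less
than `1/(π√3)`. (Indexed below by `n : ℕ` via `n ↦ n+1`, with `3(n+1) − 1 = 3n + 2`.) -/
theorem stmt13 :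
    Summable (fun n : ℕ =>
      ((Nat.factorial (3 * n + 2) : ℝ) / (Nat.factorial (n + 1) : ℝ) ^ 3)
        * (1 / 27 : ℝ) ^ (n + 1)) ∧
    (∑' n : ℕ, ((Nat.factorial (3 * n + 2) : ℝ) / (Nat.factorial (n + 1) : ℝ) ^ 3)
        * (1 / 27 : ℝ) ^ (n + 1))
      < 1 / (Real.pi * Real.sqrt 3) := by
  have hgsummable := gSum.summable
  have hsummable : Summable aSeq :=
    Summable.of_nonneg_of_le aSeq_nonneg aSeq_le hgsummable
  refine ⟨hsummable, ?_⟩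
  have hle : (∑' n : ℕ, aSeq n) ≤ 4/27 := by
    rw [← gSum.tsum_eq]
    exact Summable.tsum_le_tsum aSeq_le hsummable hgsummable
  have hfinal : (4/27 : ℝ) < 1 / (Real.pi * Real.sqrt 3) := by
    have hpi : Real.pi < 3.15 := Real.pi_lt_d2
    have hs3 : Real.sqrt 3 < 1.74 := by
      rw [show (1.74 : ℝ) = Real.sqrt (1.74^2) by rw [Real.sqrt_sq]; norm_num]
      apply Real.sqrt_lt_sqrt <;> norm_num
    have hpos : (0:ℝ) < Real.pi * Real.sqrt 3 := by
      have := Real.pi_pos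
      have := Real.sqrt_pos.mpr (by norm_num : (0:ℝ) < 3)
      positivity
    rw [lt_div_iff₀ hpos]
    have hs3pos : (0:ℝ) < Real.sqrt 3 := Real.sqrt_pos.mpr (by norm_num)
    nlinarith [Real.pi_pos]
  exact lt_of_le_of_lt hle hfinal
end
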